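/- arXiv:1903.02394 — 2 statements merged into one kernel-verified Lean document; each statement's English description precedes it below -/
import Mathlib

section
/- Let s ≥ 0, let E ⊆ ℝⁿ be ℋ^s_w-measurable with ℋ^s_w(E) < ∞, and let 𝒱 be a Vitali class of closed sets for E w.r.t. w. Then for every ε > 0 one may select a finite or countable pairwise disjoint sequence {Uᵢ} of sets from 𝒱 such that either Σᵢ (diam_w Uᵢ)^s = ∞ or ℋ^s_w(E \ ⋃ᵢ Uᵢ) = 0, and moreover ℋ^s_w(E) ≤ Σᵢ (diam_w Uᵢ)^s + ε. -/
open MeasureTheory Set ENNReal NNReal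

noncomputable section

/-- Points of `ℝⁿ` with the Euclidean norm. -/
abbrev Pt (n : ℕ) := EuclideanSpace ℝ (Fin n)

/-- The action of an `n × n` real matrix on Euclidean space. -/
def mapp {n : ℕ} (A : Matrix (Fin n) (Fin n) ℝ) (x : Pt n) : Pt n :=
  Matrix.toEuclideanLin A x

/-- A real matrix is expanding if all of its (complex) eigenvalues have modulus `> 1`. -/
def IsExpandingMatrix {n : ℕ} (A : Matrix (Fin n) (Fin n) ℝ) : Prop :=
  ∀ μ ∈ spectrum ℂ (A.map (fun a => (a : ℂ))), 1 < ‖μ‖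

/-- The diameter of a set with respect to the pseudo norm `w`. -/
def pdiam {n : ℕ} (w : Pt n → ℝ) (E : Set (Pt n)) : ℝ≥0∞ :=
  ⨆ (x ∈ E) (y ∈ E), ENNReal.ofReal (w (x - y))

/-- The `δ`-approximation of the `s`-dimensional pseudo Hausdorff measure. -/
def preHw {n : ℕ} (w : Pt n → ℝ) (s δ : ℝ) (E : Set (Pt n)) : ℝ≥0∞ :=
  ⨅ (U : ℕ → Set (Pt n)) (_ : E ⊆ ⋃ i, U i)
    (_ : ∀ i, pdiam w (U i) ≤ ENNReal.ofReal δ), ∑' i, pdiam w (U i) ^ s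

/-- The `s`-dimensional pseudo Hausdorff measure w.r.t. the pseudo norm `w`. -/
def Hw {n : ℕ} (w : Pt n → ℝ) (s : ℝ) (E : Set (Pt n)) : ℝ≥0∞ :=
  ⨆ (δ : ℝ) (_ : 0 < δ), preHw w s δ E

/-- Carathéodory measurability with respect to the outer measure `Hw w s`. -/
def HwMeasurable {n : ℕ} (w : Pt n → ℝ) (s : ℝ) (E : Set (Pt n)) : Prop :=
  ∀ T : Set (Pt n), Hw w s T = Hw w s (T ∩ E) + Hw w s (T \ E)

/-- A pseudo norm associated with the expanding matrix `A`. -/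
structure IsPseudoNorm {n : ℕ} (A : Matrix (Fin n) (Fin n) ℝ) (w : Pt n → ℝ) : Prop where
  continuous : Continuous w
  nonneg : ∀ x, 0 ≤ w x
  neg : ∀ x, w (-x) = w x
  eq_zero_iff : ∀ x, w x = 0 ↔ x = 0
  scaling : ∀ x, w (mapp A x) = |A.det| ^ ((1 : ℝ) / n) * w x
  quasi_triangle : ∃ β > (0 : ℝ), ∀ x y, w (x + y) ≤ β * max (w x) (w y)
  comparable : ∃ C > (0 : ℝ), ∃ α₁ > (0 : ℝ), ∃ α₂ > (0 : ℝ),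
    (∀ x : Pt n, 1 < ‖x‖ → C⁻¹ * ‖x‖ ^ α₁ ≤ w x ∧ w x ≤ C * ‖x‖ ^ α₂) ∧
    (∀ x : Pt n, ‖x‖ ≤ 1 → C⁻¹ * ‖x‖ ^ α₂ ≤ w x ∧ w x ≤ C * ‖x‖ ^ α₁)

/-- The map `f_d(x) = A⁻¹(x + d)` of the self-affine IFS. -/
def fIFS {n : ℕ} (A : Matrix (Fin n) (Fin n) ℝ) (d : Pt n) (x : Pt n) : Pt n :=
  mapp A⁻¹ (x + d)

/-- The open set condition for the IFS `{f_d}_{d ∈ D}`. -/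
def OSC {n : ℕ} (A : Matrix (Fin n) (Fin n) ℝ) (D : Finset (Pt n)) : Prop :=
  ∃ V : Set (Pt n), V.Nonempty ∧ IsOpen V ∧ Bornology.IsBounded V ∧
    (⋃ d ∈ D, fIFS A d '' V) ⊆ V ∧
    ∀ d ∈ D, ∀ d' ∈ D, d ≠ d' → fIFS A d '' V ∩ fIFS A d' '' V = ∅

/-- `K` is the self-affine set (attractor) for the pair `(A, D)`:
a nonempty compact set with `A K = ⋃_{d ∈ D} (K + d)`. -/
def IsSelfAffineSet {n : ℕ} (A : Matrix (Fin n) (Fin n) ℝ) (D : Finset (Pt n))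
    (K : Set (Pt n)) : Prop :=
  K.Nonempty ∧ IsCompact K ∧ mapp A '' K = ⋃ d ∈ D, (fun x => x + d) '' K

/-- The set `𝒟_M` of `M`-fold expansions `Σ_{j<M} A^j d_j`. -/
def DsetM {n : ℕ} (A : Matrix (Fin n) (Fin n) ℝ) (D : Finset (Pt n)) (M : ℕ) :
    Set (Pt n) :=
  {x | ∃ d : Fin M → Pt n, (∀ j, d j ∈ D) ∧ x = ∑ j : Fin M, mapp (A ^ (j : ℕ)) (d j)}

/-- The set `𝒟_∞ = ⋃_{M ≥ 1} 𝒟_M`. -/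
def DsetInf {n : ℕ} (A : Matrix (Fin n) (Fin n) ℝ) (D : Finset (Pt n)) : Set (Pt n) :=
  ⋃ (M : ℕ) (_ : 1 ≤ M), DsetM A D M

/-- A set is uniformly discrete if distinct points are uniformly separated. -/
def UniformlyDiscrete {n : ℕ} (S : Set (Pt n)) : Prop :=
  ∃ δ > (0 : ℝ), ∀ x ∈ S, ∀ y ∈ S, x ≠ y → δ < ‖x - y‖

/-- `σ` is the invariant (self-affine) probability measure of the IFS `{f_d}_{d ∈ D}`. -/
def IsInvariantMeasure {n : ℕ} (A : Matrix (Fin n) (Fin n) ℝ) (D : Finset (Pt n))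
    (σ : Measure (Pt n)) : Prop :=
  IsProbabilityMeasure σ ∧
  ∀ f : Pt n → ℝ, Continuous f → HasCompactSupport f →
    ∫ x, f x ∂σ = ((D.card : ℝ))⁻¹ * ∑ d ∈ D, ∫ x, f (fIFS A d x) ∂σ

/-- The measure `μ_M = Σ_{d_0,…,d_{M−1} ∈ 𝒟} δ_{d_0 + A d_1 + ⋯ + A^{M−1} d_{M−1}}`. -/
def muM {n : ℕ} (A : Matrix (Fin n) (Fin n) ℝ) (D : Finset (Pt n)) (M : ℕ) :
    Measure (Pt n) :=
  ∑ d ∈ (Finset.univ : Finset (Fin M → {x : Pt n // x ∈ D})),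
    Measure.dirac (∑ j : Fin M, mapp (A ^ (j : ℕ)) ((d j : Pt n)))

/-- Convolution of two Borel measures on `ℝⁿ`. -/
def mconv {n : ℕ} (μ ν : Measure (Pt n)) : Measure (Pt n) :=
  Measure.map (fun p : Pt n × Pt n => p.1 + p.2) (μ.prod ν)

/-- The upper `s`-density `ℰ⁺_{w,s}(ν)` of a Borel measure `ν` w.r.t. the pseudo norm `w`. -/
def upperDensity {n : ℕ} (w : Pt n → ℝ) (s : ℝ) (ν : Measure (Pt n)) : ℝ≥0∞ :=
  ⨅ (r : ℝ) (_ : 0 < r),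
    ⨆ (U : Set (Pt n)) (_ : IsCompact U) (_ : Convex ℝ U)
      (_ : ENNReal.ofReal r ≤ pdiam w U), ν U / pdiam w U ^ s

/-- The upper convex `s`-density `D^s_{w,c}(E, x)` of `E` at `x` w.r.t. `w`. -/
def upperConvexDensity {n : ℕ} (w : Pt n → ℝ) (s : ℝ) (E : Set (Pt n)) (x : Pt n) :
    ℝ≥0∞ :=
  ⨅ (r : ℝ) (_ : 0 < r),
    ⨆ (U : Set (Pt n)) (_ : Convex ℝ U) (_ : x ∈ U) (_ : 0 < pdiam w U)
      (_ : pdiam w U ≤ ENNReal.ofReal r), Hw w s (E ∩ U) / pdiam w U ^ s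

/-- The pseudo Hausdorff dimension `dim_H^w E = inf {s ≥ 0 : ℋ^s_w(E) = 0}`. -/
def dimHw {n : ℕ} (w : Pt n → ℝ) (E : Set (Pt n)) : ℝ≥0∞ :=
  ⨅ (t : ℝ≥0) (_ : Hw w (t : ℝ) E = 0), (t : ℝ≥0∞)

/-- `𝒱` is a Vitali class for `E` w.r.t. `w`. -/
def VitaliClass {n : ℕ} (w : Pt n → ℝ) (𝒱 : Set (Set (Pt n))) (E : Set (Pt n)) : Prop :=
  ∀ x ∈ E, ∀ δ : ℝ, 0 < δ →
    ∃ U ∈ 𝒱, x ∈ U ∧ 0 < pdiam w U ∧ pdiam w U ≤ ENNReal.ofReal δ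

/-- The composite map `f_𝐢 = f_{i₁} ∘ ⋯ ∘ f_{i_m}` associated with a word of digits. -/
def fWord {n : ℕ} (A : Matrix (Fin n) (Fin n) ℝ) (i : List (Pt n)) (x : Pt n) : Pt n :=
  i.foldr (fun d y => fIFS A d y) x

namespace VitaliAux

variable {n : ℕ} {w : Pt n → ℝ}

lemma le_pdiam {U : Set (Pt n)} {x y : Pt n} (hx : x ∈ U) (hy : y ∈ U) :
    ENNReal.ofReal (w (x - y)) ≤ pdiam w U := by
  refine le_trans ?_ (le_iSup₂ (f := fun x (_ : x ∈ U) => ⨆ (y ∈ U), ENNReal.ofReal (w (x - y))) x hx)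
  exact le_iSup₂ (f := fun y (_ : y ∈ U) => ENNReal.ofReal (w (x - y))) y hy

lemma pdiam_le {U : Set (Pt n)} {a : ℝ≥0∞}
    (h : ∀ x ∈ U, ∀ y ∈ U, ENNReal.ofReal (w (x - y)) ≤ a) : pdiam w U ≤ a :=
  iSup₂_le fun x hx => iSup₂_le fun y hy => h x hx y hy

lemma pdiam_empty : pdiam w (∅ : Set (Pt n)) = 0 := by
  simp [pdiam]

lemma nonempty_of_pdiam_pos {U : Set (Pt n)} (h : 0 < pdiam w U) : U.Nonempty := by
  by_contra hne
  rw [Set.not_nonempty_iff_eq_empty] at hne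
  rw [hne, pdiam_empty] at h
  exact lt_irrefl _ h

/-- The enlargement of a set. -/
def enlarge (w : Pt n → ℝ) (U : Set (Pt n)) : Set (Pt n) :=
  {y | ∃ u ∈ U, ENNReal.ofReal (w (y - u)) ≤ 2 * pdiam w U}

lemma subset_enlarge (hw0 : w 0 = 0) (U : Set (Pt n)) : U ⊆ enlarge w U := by
  intro y hy
  exact ⟨y, hy, by simp [hw0]⟩

lemma subset_enlarge_of_inter {U V : Set (Pt n)} {z : Pt n} (hz : z ∈ V ∩ U)
    (h : pdiam w V ≤ 2 * pdiam w U) : V ⊆ enlarge w U := by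
  intro y hy
  exact ⟨z, hz.2, le_trans (le_pdiam hy hz.1) h⟩

lemma ofReal_max' (a c : ℝ) :
    ENNReal.ofReal (max a c) = max (ENNReal.ofReal a) (ENNReal.ofReal c) :=
  Monotone.map_max (fun _ _ h => ENNReal.ofReal_le_ofReal h)

lemma pdiam_enlarge {β : ℝ} (hβ1 : 1 ≤ β)
    (hβ : ∀ x y, w (x + y) ≤ β * max (w x) (w y))
    (hneg : ∀ x, w (-x) = w x) (U : Set (Pt n)) :
    pdiam w (enlarge w U) ≤ ENNReal.ofReal (2 * β ^ 2) * pdiam w U := by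
  have hβ0 : 0 ≤ β := le_trans zero_le_one hβ1
  set p := pdiam w U with hp
  set b := ENNReal.ofReal β with hbdef
  have hb1 : (1 : ℝ≥0∞) ≤ b := by
    rw [hbdef, ← ENNReal.ofReal_one]; exact ENNReal.ofReal_le_ofReal hβ1
  refine pdiam_le fun y hy y' hy' => ?_
  obtain ⟨u, hu, hyu⟩ := hy
  obtain ⟨u', hu', hyu'⟩ := hy'
  have key : w (y - y') ≤ β * max (w (y - u)) (β * max (w (u - u')) (w (u' - y'))) := by
    have h1 : y - y' = (y - u) + ((u - u') + (u' - y')) := by abel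
    rw [h1]
    refine le_trans (hβ _ _) ?_
    gcongr
    exact hβ _ _
  have e2 : ENNReal.ofReal (w (u - u')) ≤ 2 * p :=
    le_trans (le_pdiam hu hu') (le_mul_of_one_le_left' one_le_two)
  have e3 : ENNReal.ofReal (w (u' - y')) ≤ 2 * p := by
    have : u' - y' = -(y' - u') := by abel
    rw [this, hneg]; exact hyu'
  calc ENNReal.ofReal (w (y - y'))
      ≤ ENNReal.ofReal (β * max (w (y - u)) (β * max (w (u - u')) (w (u' - y')))) :=
        ENNReal.ofReal_le_ofReal key
    _ = b * max (ENNReal.ofReal (w (y - u)))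
          (b * max (ENNReal.ofReal (w (u - u'))) (ENNReal.ofReal (w (u' - y')))) := by
        rw [ENNReal.ofReal_mul hβ0, ofReal_max', ENNReal.ofReal_mul hβ0, ofReal_max']
    _ ≤ b * max (2 * p) (b * max (2 * p) (2 * p)) := by gcongr
    _ = b * max (2 * p) (b * (2 * p)) := by rw [max_self]
    _ = b * (b * (2 * p)) := by rw [max_eq_right (le_mul_of_one_le_left' hb1)]
    _ = 2 * b ^ 2 * p := by ring
    _ = ENNReal.ofReal (2 * β ^ 2) * p := by
        rw [ENNReal.ofReal_mul (by norm_num), ENNReal.ofReal_pow hβ0, ENNReal.ofReal_ofNat]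

/-- Greedy list of previously chosen sets. -/
def glist {α : Type*} (pick : List α → α) : ℕ → List α
  | 0 => []
  | m + 1 => glist pick m ++ [pick (glist pick m)]

/-- Greedy sequence. -/
def gseq {α : Type*} (pick : List α → α) (m : ℕ) : α := pick (glist pick m)

lemma mem_glist {α : Type*} (pick : List α → α) (m : ℕ) (a : α) :
    a ∈ glist pick m ↔ ∃ i < m, gseq pick i = a := by
  induction m with
  | zero => simp [glist]
  | succ k ih =>
    simp only [glist, List.mem_append, List.mem_singleton, ih]
    constructor
    · rintro (⟨i, hi, rfl⟩ | rfl)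
      · exact ⟨i, Nat.lt_succ_of_lt hi, rfl⟩
      · exact ⟨k, Nat.lt_succ_self k, rfl⟩
    · rintro ⟨i, hi, rfl⟩
      rcases Nat.lt_succ_iff_lt_or_eq.1 hi with h | rfl
      · exact Or.inl ⟨i, h, rfl⟩
      · exact Or.inr rfl

lemma small_norm {C α₁ α₂ : ℝ} (hC : 0 < C) (hα₁ : 0 < α₁) (hα₂ : 0 < α₂)
    (h1 : ∀ x : Pt n, 1 < ‖x‖ → C⁻¹ * ‖x‖ ^ α₁ ≤ w x)
    (h2 : ∀ x : Pt n, ‖x‖ ≤ 1 → C⁻¹ * ‖x‖ ^ α₂ ≤ w x)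
    {r : ℝ} (hr : 0 < r) :
    ∃ δ > (0:ℝ), ∀ z : Pt n, w z ≤ δ → ‖z‖ < r := by
  have hCi : 0 < C⁻¹ := inv_pos.2 hC
  set m := min r 1 with hm
  have hm0 : 0 < m := lt_min hr one_pos
  have hmr : m ≤ r := min_le_left _ _
  have hmα : 0 < m ^ α₂ := Real.rpow_pos_of_pos hm0 _
  refine ⟨min (C⁻¹ / 2) (C⁻¹ * m ^ α₂ / 2), by positivity, fun z hz => ?_⟩
  have hz1 : ‖z‖ ≤ 1 := by
    by_contra hlt
    push_neg at hlt
    have hb := h1 z hlt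
    have h1α : (1:ℝ) < ‖z‖ ^ α₁ := by
      calc (1:ℝ) = 1 ^ α₁ := (Real.one_rpow _).symm
      _ < ‖z‖ ^ α₁ := Real.rpow_lt_rpow zero_le_one hlt hα₁
    have : C⁻¹ < w z := by nlinarith
    have : w z ≤ C⁻¹ / 2 := le_trans hz (min_le_left _ _)
    linarith
  have hb := h2 z hz1
  have hz2 : w z ≤ C⁻¹ * m ^ α₂ / 2 := le_trans hz (min_le_right _ _)
  have hkey : C⁻¹ * ‖z‖ ^ α₂ < C⁻¹ * m ^ α₂ := by nlinarith
  have hlt : ‖z‖ ^ α₂ < m ^ α₂ := lt_of_mul_lt_mul_left hkey hCi.le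
  by_contra hge
  push_neg at hge
  have : m ^ α₂ ≤ ‖z‖ ^ α₂ := Real.rpow_le_rpow hm0.le (le_trans hmr hge) hα₂.le
  linarith

lemma preHw_le {s δ : ℝ} {E : Set (Pt n)} (U : ℕ → Set (Pt n)) (hcov : E ⊆ ⋃ i, U i)
    (hb : ∀ i, pdiam w (U i) ≤ ENNReal.ofReal δ) :
    preHw w s δ E ≤ ∑' i, pdiam w (U i) ^ s := by
  refine iInf_le_of_le U (iInf_le_of_le hcov (iInf_le _ hb))

end VitaliAux


set_option maxHeartbeats 1000000 in
/-- Vitali covering theorem (b) for the pseudo Hausdorff measure. -/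
theorem stmt10 {n : ℕ} (hn : 0 < n) (A : Matrix (Fin n) (Fin n) ℝ)
    (hA : IsExpandingMatrix A)
    (hAnorm : ∀ x : Pt n, ‖x‖ ≤ ‖mapp A x‖)
    (hAeq : ∀ x : Pt n, ‖x‖ = ‖mapp A x‖ → x = 0)
    (w : Pt n → ℝ) (hw : IsPseudoNorm A w)
    (s : ℝ) (hs : 0 ≤ s) (E : Set (Pt n)) (hE : HwMeasurable w s E)
    (hfin : Hw w s E < ⊤)
    (𝒱 : Set (Set (Pt n))) (hcl : ∀ U ∈ 𝒱, IsClosed U)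
    (hV : VitaliClass w 𝒱 E) (ε : ℝ) (hε : 0 < ε) :
    ∃ 𝒰 : Set (Set (Pt n)), 𝒰 ⊆ 𝒱 ∧ 𝒰.Countable ∧ 𝒰.PairwiseDisjoint id ∧
      ((∑' U : 𝒰, pdiam w (U : Set (Pt n)) ^ s) = ⊤ ∨
        Hw w s (E \ ⋃₀ 𝒰) = 0) ∧
      Hw w s E ≤ (∑' U : 𝒰, pdiam w (U : Set (Pt n)) ^ s) + ENNReal.ofReal ε := by
  classical
  have hw0 : w 0 = 0 := (hw.eq_zero_iff 0).2 rfl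
  obtain ⟨β, hβpos, hβtri⟩ := hw.quasi_triangle
  have hβ1 : (1:ℝ) ≤ β := by
    set x₀ : Pt n := EuclideanSpace.single ⟨0, hn⟩ (1:ℝ) with hx₀def
    have hx₀ : x₀ ≠ 0 := by
      intro h
      have h1 : x₀ ⟨0, hn⟩ = 1 := by simp [hx₀def]
      rw [h] at h1
      simp at h1
    have hwx₀ : 0 < w x₀ :=
      lt_of_le_of_ne (hw.nonneg _) (fun h => hx₀ ((hw.eq_zero_iff _).1 h.symm))
    have htri := hβtri x₀ 0
    rw [add_zero, hw0, max_eq_left (hw.nonneg _)] at htri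
    nlinarith
  rcases eq_or_lt_of_le hs with hs0 | hs0
  · exfalso
    have hpre : preHw w s 1 E = ⊤ := by
      refine le_antisymm le_top ?_
      unfold preHw
      simp only [le_iInf_iff]
      intro U hU hb
      have h1 : ∑' i, pdiam w (U i) ^ s = ∑' (_ : ℕ), (1:ℝ≥0∞) :=
        tsum_congr fun i => by rw [← hs0, ENNReal.rpow_zero]
      rw [h1, ENNReal.tsum_const_eq_top_of_ne_zero one_ne_zero]
    have htop : (⊤:ℝ≥0∞) ≤ Hw w s E := by
      rw [← hpre]
      exact le_iSup₂ (f := fun δ (_ : (0:ℝ) < δ) => preHw w s δ E) 1 one_pos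
    exact absurd (lt_of_le_of_lt htop hfin) (lt_irrefl _)
  -- now 0 < s
  obtain ⟨δ₀, hδ₀pos, hδ₀⟩ : ∃ δ₀ > (0:ℝ), Hw w s E ≤ preHw w s δ₀ E + ENNReal.ofReal ε := by
    rcases eq_or_ne (Hw w s E) 0 with h0 | h0
    · exact ⟨1, one_pos, by rw [h0]; exact zero_le⟩
    · have hεne : ENNReal.ofReal ε ≠ 0 := (ENNReal.ofReal_pos.2 hε).ne'
      have hlt : Hw w s E - ENNReal.ofReal ε < Hw w s E :=
        ENNReal.sub_lt_self hfin.ne h0 hεne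
      unfold Hw at hlt
      obtain ⟨δ₀, hlt⟩ := lt_iSup_iff.1 hlt
      obtain ⟨hδ₀pos, hlt⟩ := lt_iSup_iff.1 hlt
      exact ⟨δ₀, hδ₀pos, by rw [← tsub_le_iff_right]; exact hlt.le⟩
  have hγ1 : (1:ℝ) ≤ 2 * β ^ 2 := by nlinarith
  set η := δ₀ / (2 * β ^ 2) with hηdef
  have hη : 0 < η := div_pos hδ₀pos (by nlinarith)
  set c := ENNReal.ofReal (2 * β ^ 2) with hcdef
  have hcη : c * ENNReal.ofReal η = ENNReal.ofReal δ₀ := by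
    rw [hcdef, ← ENNReal.ofReal_mul (by nlinarith)]
    congr 1
    rw [hηdef]
    field_simp
  have hηδ₀ : η ≤ δ₀ := by
    rw [hηdef]; exact div_le_self hδ₀pos.le hγ1
  have hcne0 : c ≠ 0 := (ENNReal.ofReal_pos.2 (by nlinarith)).ne'
  have hcnetop : c ≠ ⊤ := ENNReal.ofReal_ne_top
  have hcs_ne_top : c ^ s ≠ ⊤ := ENNReal.rpow_ne_top_of_nonneg hs hcnetop
  -- candidate sets
  set cand' : List (Set (Pt n)) → Set (Set (Pt n)) := fun l =>
    {V | V ∈ 𝒱 ∧ 0 < pdiam w V ∧ pdiam w V ≤ ENNReal.ofReal η ∧ ∀ U ∈ l, Disjoint V U}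
    with hcand
  have hcand_mem : ∀ l V, V ∈ cand' l ↔
      (V ∈ 𝒱 ∧ 0 < pdiam w V ∧ pdiam w V ≤ ENNReal.ofReal η ∧ ∀ U ∈ l, Disjoint V U) :=
    fun l V => Iff.rfl
  have hpickex : ∀ l : List (Set (Pt n)), ∃ Ul : Set (Pt n),
      ((cand' l).Nonempty → Ul ∈ cand' l ∧ ∀ V ∈ cand' l, pdiam w V ≤ 2 * pdiam w Ul) ∧
      (¬ (cand' l).Nonempty → Ul = ∅) := by
    intro l
    by_cases h : (cand' l).Nonempty
    · have hS0 : (⨆ V ∈ cand' l, pdiam w V) ≠ 0 := by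
        obtain ⟨V₀, hV₀⟩ := h
        have h0 : 0 < pdiam w V₀ := ((hcand_mem l V₀).1 hV₀).2.1
        exact ne_of_gt (lt_of_lt_of_le h0
          (le_iSup₂ (f := fun V (_ : V ∈ cand' l) => pdiam w V) V₀ hV₀))
      have hSle : (⨆ V ∈ cand' l, pdiam w V) ≤ ENNReal.ofReal η :=
        iSup₂_le fun V hV => ((hcand_mem l V).1 hV).2.2.1
      have hStop : (⨆ V ∈ cand' l, pdiam w V) ≠ ⊤ :=
        ne_top_of_le_ne_top ENNReal.ofReal_ne_top hSle
      have hhalf := ENNReal.half_lt_self hS0 hStop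
      obtain ⟨V, hV2⟩ := lt_iSup_iff.1 hhalf
      obtain ⟨hVmem, hV2⟩ := lt_iSup_iff.1 hV2
      refine ⟨V, fun _ => ⟨hVmem, fun V' hV' => ?_⟩, fun h' => absurd h h'⟩
      have hS2 : (⨆ V ∈ cand' l, pdiam w V) ≤ 2 * pdiam w V := by
        calc (⨆ V ∈ cand' l, pdiam w V)
            = 2 * ((⨆ V ∈ cand' l, pdiam w V) / 2) :=
              (ENNReal.mul_div_cancel (by norm_num) ENNReal.ofNat_ne_top).symm
          _ ≤ 2 * pdiam w V := mul_le_mul_right hV2.le 2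
      exact le_trans (le_iSup₂ (f := fun V (_ : V ∈ cand' l) => pdiam w V) V' hV') hS2
    · exact ⟨∅, fun h' => absurd h' h, fun _ => rfl⟩
  choose pick hpick1 hpick2 using hpickex
  have hmem_glist : ∀ m U, U ∈ VitaliAux.glist pick m ↔ ∃ i < m, VitaliAux.gseq pick i = U :=
    fun m U => VitaliAux.mem_glist pick m U
  have hsel : ∀ i, (cand' (VitaliAux.glist pick i)).Nonempty →
      VitaliAux.gseq pick i ∈ cand' (VitaliAux.glist pick i) ∧
      ∀ V ∈ cand' (VitaliAux.glist pick i), pdiam w V ≤ 2 * pdiam w (VitaliAux.gseq pick i) :=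
    fun i => hpick1 (VitaliAux.glist pick i)
  have hemp : ∀ i, ¬ (cand' (VitaliAux.glist pick i)).Nonempty → VitaliAux.gseq pick i = ∅ :=
    fun i => hpick2 (VitaliAux.glist pick i)
  have hDle : ∀ i, pdiam w (VitaliAux.gseq pick i) ≤ ENNReal.ofReal η := by
    intro i
    by_cases h : (cand' (VitaliAux.glist pick i)).Nonempty
    · exact ((hcand_mem _ _).1 (hsel i h).1).2.2.1
    · rw [hemp i h, VitaliAux.pdiam_empty]; exact zero_le
  have hclosed : ∀ i, IsClosed (VitaliAux.gseq pick i) := by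
    intro i
    by_cases h : (cand' (VitaliAux.glist pick i)).Nonempty
    · exact hcl _ ((hcand_mem _ _).1 (hsel i h).1).1
    · rw [hemp i h]; exact isClosed_empty
  have hdisj' : ∀ i j, i < j → Disjoint (VitaliAux.gseq pick j) (VitaliAux.gseq pick i) := by
    intro i j hij
    by_cases h : (cand' (VitaliAux.glist pick j)).Nonempty
    · exact ((hcand_mem _ _).1 (hsel j h).1).2.2.2 _ ((hmem_glist j _).2 ⟨i, hij, rfl⟩)
    · rw [hemp j h]; exact Set.empty_disjoint _
  have hcand_exists : ∀ (m : ℕ) (x : Pt n), x ∈ E → (∀ i, i < m → x ∉ VitaliAux.gseq pick i) →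
      ∃ V ∈ cand' (VitaliAux.glist pick m), x ∈ V := by
    intro m x hx hxn
    have hFclosed : IsClosed (⋃ i ∈ Set.Iio m, VitaliAux.gseq pick i) :=
      Set.Finite.isClosed_biUnion (Set.finite_Iio m) (fun i _ => hclosed i)
    have hxF : x ∉ ⋃ i ∈ Set.Iio m, VitaliAux.gseq pick i := by
      intro hmem
      obtain ⟨i, hi, hxi⟩ := Set.mem_iUnion₂.1 hmem
      exact hxn i hi hxi
    obtain ⟨r, hr0, hrF⟩ : ∃ r > (0:ℝ), ∀ y ∈ ⋃ i ∈ Set.Iio m, VitaliAux.gseq pick i,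
        r ≤ dist x y := by
      rcases Set.eq_empty_or_nonempty (⋃ i ∈ Set.Iio m, VitaliAux.gseq pick i) with hFe | hFne
      · exact ⟨1, one_pos, fun y hy => absurd (hFe ▸ hy) (Set.notMem_empty y)⟩
      · exact ⟨Metric.infDist x _, (hFclosed.notMem_iff_infDist_pos hFne).1 hxF,
          fun y hy => Metric.infDist_le_dist_of_mem hy⟩
    obtain ⟨C, hC, α₁, hα₁, α₂, hα₂, hcomp1, hcomp2⟩ := hw.comparable
    obtain ⟨δr, hδr0, hδr⟩ := VitaliAux.small_norm hC hα₁ hα₂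
      (fun z hz => (hcomp1 z hz).1) (fun z hz => (hcomp2 z hz).1) hr0
    obtain ⟨V, hV𝒱, hxV, hVpos, hVle⟩ := hV x hx (min η δr) (lt_min hη hδr0)
    have hVball : ∀ y ∈ V, r ≤ dist x y → False := by
      intro y hyV hge
      have h1 : ENNReal.ofReal (w (x - y)) ≤ ENNReal.ofReal (min η δr) :=
        le_trans (VitaliAux.le_pdiam hxV hyV) hVle
      have h2 : w (x - y) ≤ min η δr :=
        (ENNReal.ofReal_le_ofReal_iff (lt_min hη hδr0).le).1 h1
      have h3 : ‖x - y‖ < r := hδr _ (le_trans h2 (min_le_right _ _))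
      rw [dist_eq_norm] at hge
      linarith
    refine ⟨V, ?_, hxV⟩
    refine (hcand_mem _ _).2 ⟨hV𝒱, hVpos,
      le_trans hVle (ENNReal.ofReal_le_ofReal (min_le_left _ _)), ?_⟩
    intro U hU
    obtain ⟨i, hi, rfl⟩ := (hmem_glist m U).1 hU
    rw [Set.disjoint_left]
    intro y hyV hyU
    exact hVball y hyV (hrF y (Set.mem_biUnion hi hyU))
  have henl : ∀ (U : Set (Pt n)), pdiam w (VitaliAux.enlarge w U) ≤ c * pdiam w U :=
    fun U => VitaliAux.pdiam_enlarge hβ1 hβtri hw.neg U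
  have henlδ₀ : ∀ i, pdiam w (VitaliAux.enlarge w (VitaliAux.gseq pick i)) ≤ ENNReal.ofReal δ₀ := by
    intro i
    refine le_trans (henl _) ?_
    calc c * pdiam w (VitaliAux.gseq pick i) ≤ c * ENNReal.ofReal η :=
          mul_le_mul_right (hDle i) c
      _ = ENNReal.ofReal δ₀ := hcη
  set T := ∑' i, pdiam w (VitaliAux.gseq pick i) ^ s with hTdef
  set I : Set ℕ := {i | (cand' (VitaliAux.glist pick i)).Nonempty} with hIdef
  have hVsub : ∀ i ∈ I, VitaliAux.gseq pick i ∈ 𝒱 := fun i hi => ((hcand_mem _ _).1 (hsel i hi).1).1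
  have hDpos : ∀ i ∈ I, 0 < pdiam w (VitaliAux.gseq pick i) :=
    fun i hi => ((hcand_mem _ _).1 (hsel i hi).1).2.1
  have hne_empty : ∀ i ∈ I, VitaliAux.gseq pick i ≠ ∅ := by
    intro i hi h
    have := hDpos i hi
    rw [h, VitaliAux.pdiam_empty] at this
    exact lt_irrefl _ this
  have hinj : Set.InjOn (VitaliAux.gseq pick) I := by
    intro i hi j hj hij
    by_contra hne
    have hd : Disjoint (VitaliAux.gseq pick i) (VitaliAux.gseq pick j) := by
      rcases lt_or_gt_of_ne hne with h | h
      · exact (hdisj' i j h).symm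
      · exact hdisj' j i h
    rw [hij] at hd
    rw [disjoint_self] at hd
    exact hne_empty j hj hd
  have hsub : VitaliAux.gseq pick '' I ⊆ 𝒱 := by
    rintro _ ⟨i, hi, rfl⟩
    exact hVsub i hi
  have hcnt : (VitaliAux.gseq pick '' I).Countable := (Set.to_countable I).image _
  have hpair : (VitaliAux.gseq pick '' I).PairwiseDisjoint id := by
    rintro _ ⟨i, hi, rfl⟩ _ ⟨j, hj, rfl⟩ hne
    have hij : i ≠ j := fun h => hne (by rw [h])
    rcases hij.lt_or_gt with h | h
    · exact (hdisj' i j h).symm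
    · exact hdisj' j i h
  have hsum : ∑' (U : (VitaliAux.gseq pick '' I : Set (Set (Pt n)))),
      pdiam w (U : Set (Pt n)) ^ s = T := by
    have hsupp : Function.support (fun i => pdiam w (VitaliAux.gseq pick i) ^ s) ⊆ I := by
      intro i hi
      by_contra hiI
      apply hi
      show pdiam w (VitaliAux.gseq pick i) ^ s = 0
      rw [hemp i hiI, VitaliAux.pdiam_empty, ENNReal.zero_rpow_of_pos hs0]
    have h2 : ∑' (x : ↑I), pdiam w (VitaliAux.gseq pick (x : ℕ)) ^ s = T := by
      rw [hTdef]
      exact tsum_subtype_eq_of_support_subset hsupp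
    have h1 : ∑' (x : ↑I), pdiam w (VitaliAux.gseq pick (x : ℕ)) ^ s
        = ∑' (U : (VitaliAux.gseq pick '' I : Set (Set (Pt n)))),
            pdiam w (U : Set (Pt n)) ^ s := by
      exact (Equiv.Set.imageOfInjOn (VitaliAux.gseq pick) I hinj).tsum_eq
        (f := fun U : (VitaliAux.gseq pick '' I : Set (Set (Pt n))) =>
          pdiam w (U : Set (Pt n)) ^ s)
    exact h1.symm.trans h2
  have hU : ⋃₀ (VitaliAux.gseq pick '' I) = ⋃ i, VitaliAux.gseq pick i := by
    rw [Set.sUnion_image]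
    apply Set.Subset.antisymm
    · exact Set.iUnion₂_subset fun i _ => Set.subset_iUnion (VitaliAux.gseq pick) i
    · refine Set.iUnion_subset fun i => ?_
      by_cases hi : i ∈ I
      · exact Set.subset_biUnion_of_mem hi
      · rw [hemp i hi]
        exact Set.empty_subset _
  rcases eq_or_ne T ⊤ with hT | hT
  · exact ⟨VitaliAux.gseq pick '' I, hsub, hcnt, hpair, Or.inl (hsum.trans hT),
      by rw [hsum, hT, top_add]; exact le_top⟩
    -- hard case : T ≠ ⊤
  have hcover : ∀ m, E ⊆ (⋃ i ∈ Set.Iio m, VitaliAux.gseq pick i) ∪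
      ⋃ i, VitaliAux.enlarge w (VitaliAux.gseq pick (i + m)) := by
    intro m x hx
    by_cases hxU : ∃ i, x ∈ VitaliAux.gseq pick i
    · obtain ⟨i, hi⟩ := hxU
      rcases lt_or_ge i m with him | him
      · exact Or.inl (Set.mem_biUnion him hi)
      · refine Or.inr (Set.mem_iUnion.2 ⟨i - m, ?_⟩)
        rw [Nat.sub_add_cancel him]
        exact VitaliAux.subset_enlarge hw0 _ hi
    · push_neg at hxU
      obtain ⟨V, hVc, hxV⟩ := hcand_exists m x hx (fun i _ => hxU i)
      have hVprop := (hcand_mem _ V).1 hVc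
      have hint : ∃ j, ¬ Disjoint V (VitaliAux.gseq pick j) := by
        by_contra hno
        push_neg at hno
        have hVall : ∀ j, V ∈ cand' (VitaliAux.glist pick j) := by
          intro j
          refine (hcand_mem _ _).2 ⟨hVprop.1, hVprop.2.1, hVprop.2.2.1, fun U hU => ?_⟩
          obtain ⟨i, _, rfl⟩ := (hmem_glist j U).1 hU
          exact hno i
        have hle2 : ∀ j, pdiam w V ≤ 2 * pdiam w (VitaliAux.gseq pick j) :=
          fun j => (hsel j ⟨V, hVall j⟩).2 V (hVall j)
        have hhalfle : ∀ j, pdiam w V / 2 ≤ pdiam w (VitaliAux.gseq pick j) := by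
          intro j
          rw [ENNReal.div_le_iff (by norm_num) ENNReal.ofNat_ne_top, mul_comm]
          exact hle2 j
        have hposrp : (pdiam w V / 2) ^ s ≠ 0 := by
          have h0 : pdiam w V / 2 ≠ 0 :=
            ENNReal.div_ne_zero.2 ⟨hVprop.2.1.ne', ENNReal.ofNat_ne_top⟩
          have htop : pdiam w V / 2 ≠ ⊤ :=
            ne_top_of_le_ne_top (ne_top_of_le_ne_top ENNReal.ofReal_ne_top hVprop.2.2.1)
              ENNReal.half_le_self
          exact (ENNReal.rpow_pos (lt_of_le_of_ne (zero_le) (Ne.symm h0)) htop).ne'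
        have htople : (⊤:ℝ≥0∞) ≤ T := by
          calc (⊤:ℝ≥0∞) = ∑' (_ : ℕ), (pdiam w V / 2) ^ s :=
                (ENNReal.tsum_const_eq_top_of_ne_zero hposrp).symm
            _ ≤ T := by
                rw [hTdef]
                exact ENNReal.tsum_le_tsum fun j => ENNReal.rpow_le_rpow (hhalfle j) hs
        exact hT (top_le_iff.1 htople)
      have hj : ¬ Disjoint V (VitaliAux.gseq pick (Nat.find hint)) := Nat.find_spec hint
      have hjmin : ∀ k, k < Nat.find hint → Disjoint V (VitaliAux.gseq pick k) :=
        fun k hk => not_not.1 (Nat.find_min hint hk)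
      have hjm : m ≤ Nat.find hint := by
        by_contra hlt
        push_neg at hlt
        exact hj (hVprop.2.2.2 _ ((hmem_glist m _).2 ⟨Nat.find hint, hlt, rfl⟩))
      have hVcj : V ∈ cand' (VitaliAux.glist pick (Nat.find hint)) := by
        refine (hcand_mem _ _).2 ⟨hVprop.1, hVprop.2.1, hVprop.2.2.1, fun U hU => ?_⟩
        obtain ⟨i, hij, rfl⟩ := (hmem_glist (Nat.find hint) U).1 hU
        exact hjmin i hij
      have hle2 : pdiam w V ≤ 2 * pdiam w (VitaliAux.gseq pick (Nat.find hint)) :=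
        (hsel (Nat.find hint) ⟨V, hVcj⟩).2 V hVcj
      obtain ⟨z, hzV, hzU⟩ := Set.not_disjoint_iff.1 hj
      refine Or.inr (Set.mem_iUnion.2 ⟨Nat.find hint - m, ?_⟩)
      rw [Nat.sub_add_cancel hjm]
      exact VitaliAux.subset_enlarge_of_inter ⟨hzV, hzU⟩ hle2 hxV
  have htail0 : Filter.Tendsto (fun m => ∑' i, pdiam w (VitaliAux.gseq pick (i + m)) ^ s)
      Filter.atTop (nhds 0) := by
    refine ENNReal.tendsto_sum_nat_add (fun i => pdiam w (VitaliAux.gseq pick i) ^ s) ?_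
    rw [← hTdef]; exact hT
  have hest1 : ∀ m : ℕ, preHw w s δ₀ E ≤
      T + c ^ s * (∑' i, pdiam w (VitaliAux.gseq pick (i + m)) ^ s) := by
    intro m
    set Cov : ℕ → Set (Pt n) := fun i =>
      if i < m then VitaliAux.gseq pick i else VitaliAux.enlarge w (VitaliAux.gseq pick i)
      with hCovdef
    have hCovlt : ∀ i, i < m → Cov i = VitaliAux.gseq pick i := by
      intro i hi; rw [hCovdef]; simp only [if_pos hi]
    have hCovge : ∀ i, ¬ (i < m) → Cov i = VitaliAux.enlarge w (VitaliAux.gseq pick i) := by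
      intro i hi; rw [hCovdef]; simp only [if_neg hi]
    have hcov : E ⊆ ⋃ i, Cov i := by
      refine (hcover m).trans (Set.union_subset ?_ ?_)
      · refine Set.iUnion₂_subset fun i hi => ?_
        refine Set.subset_iUnion_of_subset i ?_
        rw [hCovlt i hi]
      · refine Set.iUnion_subset fun i => ?_
        refine Set.subset_iUnion_of_subset (i + m) ?_
        rw [hCovge (i + m) (by omega)]
    have hbound : ∀ i, pdiam w (Cov i) ≤ ENNReal.ofReal δ₀ := by
      intro i
      by_cases hi : i < m
      · rw [hCovlt i hi]
        exact le_trans (hDle i) (ENNReal.ofReal_le_ofReal hηδ₀)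
      · rw [hCovge i hi]
        exact henlδ₀ i
    refine le_trans (VitaliAux.preHw_le Cov hcov hbound) ?_
    have hsplit : ∑' i, pdiam w (Cov i) ^ s
        = ∑ i ∈ Finset.range m, pdiam w (Cov i) ^ s + ∑' i, pdiam w (Cov (i + m)) ^ s :=
      (Summable.sum_add_tsum_nat_add' (f := fun i => pdiam w (Cov i) ^ s) (k := m) ENNReal.summable).symm
    rw [hsplit]
    refine add_le_add ?_ ?_
    · calc ∑ i ∈ Finset.range m, pdiam w (Cov i) ^ s
          = ∑ i ∈ Finset.range m, pdiam w (VitaliAux.gseq pick i) ^ s :=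
            Finset.sum_congr rfl (fun i hi => by rw [hCovlt i (Finset.mem_range.1 hi)])
        _ ≤ T := by rw [hTdef]; exact ENNReal.sum_le_tsum _
    · calc ∑' i, pdiam w (Cov (i + m)) ^ s
          ≤ ∑' i, (c * pdiam w (VitaliAux.gseq pick (i + m))) ^ s := by
            refine ENNReal.tsum_le_tsum fun i => ?_
            refine ENNReal.rpow_le_rpow ?_ hs
            rw [hCovge (i + m) (by omega)]
            exact henl _
        _ = c ^ s * ∑' i, pdiam w (VitaliAux.gseq pick (i + m)) ^ s := by
            simp_rw [ENNReal.mul_rpow_of_nonneg _ _ hs]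
            exact ENNReal.tsum_mul_left
  have hpre_le_T : preHw w s δ₀ E ≤ T := by
    have hmul : Filter.Tendsto
        (fun m => T + c ^ s * (∑' i, pdiam w (VitaliAux.gseq pick (i + m)) ^ s))
        Filter.atTop (nhds (T + c ^ s * 0)) :=
      Filter.Tendsto.const_add T (ENNReal.Tendsto.const_mul htail0 (Or.inr hcs_ne_top))
    rw [mul_zero, add_zero] at hmul
    exact ge_of_tendsto' hmul hest1
  have hnull : Hw w s (E \ ⋃ i, VitaliAux.gseq pick i) = 0 := by
    refine le_antisymm ?_ (zero_le)
    unfold Hw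
    refine iSup₂_le fun δ' hδ' => ?_
    have ht₀pos : (0:ℝ≥0∞) < (ENNReal.ofReal δ' / c) ^ s := by
      have h0 : ENNReal.ofReal δ' / c ≠ 0 :=
        ENNReal.div_ne_zero.2 ⟨(ENNReal.ofReal_pos.2 hδ').ne', hcnetop⟩
      have ht : ENNReal.ofReal δ' / c ≠ ⊤ :=
        (ENNReal.div_lt_top ENNReal.ofReal_ne_top hcne0).ne
      exact ENNReal.rpow_pos (lt_of_le_of_ne (zero_le) (Ne.symm h0)) ht
    obtain ⟨m₀, hm₀⟩ := Filter.eventually_atTop.1 (htail0.eventually_lt_const ht₀pos)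
    have hDsmall : ∀ i, m₀ ≤ i →
        c * pdiam w (VitaliAux.gseq pick i) ≤ ENNReal.ofReal δ' := by
      intro i hi
      have h1 : pdiam w (VitaliAux.gseq pick i) ^ s
          ≤ ∑' k, pdiam w (VitaliAux.gseq pick (k + m₀)) ^ s := by
        have heq : pdiam w (VitaliAux.gseq pick i) ^ s
            = pdiam w (VitaliAux.gseq pick ((i - m₀) + m₀)) ^ s := by
          rw [Nat.sub_add_cancel hi]
        rw [heq]
        exact ENNReal.le_tsum (i - m₀)
      have h2 : pdiam w (VitaliAux.gseq pick i) ^ s ≤ (ENNReal.ofReal δ' / c) ^ s :=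
        le_trans h1 (hm₀ m₀ le_rfl).le
      have h3 : pdiam w (VitaliAux.gseq pick i) ≤ ENNReal.ofReal δ' / c :=
        (ENNReal.rpow_le_rpow_iff hs0).1 h2
      calc c * pdiam w (VitaliAux.gseq pick i) ≤ c * (ENNReal.ofReal δ' / c) :=
            mul_le_mul_right h3 c
        _ = ENNReal.ofReal δ' := ENNReal.mul_div_cancel hcne0 hcnetop
    have hest2 : ∀ m, m₀ ≤ m → preHw w s δ' (E \ ⋃ i, VitaliAux.gseq pick i)
        ≤ c ^ s * (∑' i, pdiam w (VitaliAux.gseq pick (i + m)) ^ s) := by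
      intro m hm
      have hcov2 : (E \ ⋃ i, VitaliAux.gseq pick i)
          ⊆ ⋃ i, VitaliAux.enlarge w (VitaliAux.gseq pick (i + m)) := by
        intro x hx
        rcases hcover m hx.1 with hl | hr
        · exfalso
          obtain ⟨i, _, hxi⟩ := Set.mem_iUnion₂.1 hl
          exact hx.2 (Set.mem_iUnion.2 ⟨i, hxi⟩)
        · exact hr
      have hbound2 : ∀ i, pdiam w (VitaliAux.enlarge w (VitaliAux.gseq pick (i + m)))
          ≤ ENNReal.ofReal δ' :=
        fun i => le_trans (henl _) (hDsmall (i + m) (le_trans hm (Nat.le_add_left m i)))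
      refine le_trans (VitaliAux.preHw_le _ hcov2 hbound2) ?_
      calc ∑' i, pdiam w (VitaliAux.enlarge w (VitaliAux.gseq pick (i + m))) ^ s
          ≤ ∑' i, (c * pdiam w (VitaliAux.gseq pick (i + m))) ^ s :=
            ENNReal.tsum_le_tsum fun i => ENNReal.rpow_le_rpow (henl _) hs
        _ = c ^ s * ∑' i, pdiam w (VitaliAux.gseq pick (i + m)) ^ s := by
            simp_rw [ENNReal.mul_rpow_of_nonneg _ _ hs]
            exact ENNReal.tsum_mul_left
    have hmul : Filter.Tendsto
        (fun m => c ^ s * (∑' i, pdiam w (VitaliAux.gseq pick (i + m)) ^ s))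
        Filter.atTop (nhds 0) := by
      have := ENNReal.Tendsto.const_mul htail0 (Or.inr hcs_ne_top)
      rwa [mul_zero] at this
    exact ge_of_tendsto hmul (Filter.eventually_atTop.2 ⟨m₀, hest2⟩)
  refine ⟨VitaliAux.gseq pick '' I, hsub, hcnt, hpair, Or.inr ?_, ?_⟩
  · rw [hU]
    exact hnull
  · rw [hsum]
    exact le_trans hδ₀ (add_le_add_left hpre_le_T _)
end
end

section
/- Let s ≥ 0, let μ be a Borel measure on ℝⁿ and let σ be a Borel probability measure on ℝⁿ. Then ℰ^+_{w,s}(μ ∗ σ) = ℰ^+_{w,s}(μ). -/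
open MeasureTheory Set ENNReal NNReal

noncomputable section

section AuxStmt14
open Pointwise

variable {n : ℕ}

lemma pdiam_mono (w : Pt n → ℝ) {U V : Set (Pt n)} (h : U ⊆ V) : pdiam w U ≤ pdiam w V := by
  refine iSup₂_le fun x hx => iSup₂_le fun y hy => ?_
  exact le_iSup_of_le x (le_iSup_of_le (h hx) (le_iSup_of_le y (le_iSup_of_le (h hy) le_rfl)))

lemma ofReal_w_le_pdiam (w : Pt n → ℝ) {U : Set (Pt n)} {x y : Pt n} (hx : x ∈ U) (hy : y ∈ U) :
    ENNReal.ofReal (w (x - y)) ≤ pdiam w U :=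
  le_iSup_of_le x (le_iSup_of_le hx (le_iSup_of_le y (le_iSup_of_le hy le_rfl)))

lemma pdiam_le (w : Pt n → ℝ) {U : Set (Pt n)} {L : ℝ≥0∞}
    (h : ∀ x ∈ U, ∀ y ∈ U, ENNReal.ofReal (w (x - y)) ≤ L) : pdiam w U ≤ L :=
  iSup₂_le fun x hx => iSup₂_le fun y hy => h x hx y hy

lemma pdiam_ne_top {w : Pt n → ℝ} (hw : Continuous w) {U : Set (Pt n)} (hU : IsCompact U) :
    pdiam w U ≠ ⊤ := by
  have hc : ContinuousOn (fun p : Pt n × Pt n => w (p.1 - p.2)) (U ×ˢ U) :=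
    (hw.comp (continuous_fst.sub continuous_snd)).continuousOn
  obtain ⟨b, hb⟩ := (hU.prod hU).bddAbove_image hc
  have : pdiam w U ≤ ENNReal.ofReal b := by
    refine pdiam_le w fun x hx y hy => ENNReal.ofReal_le_ofReal ?_
    exact hb ⟨(x, y), ⟨hx, hy⟩, rfl⟩
  exact ne_top_of_le_ne_top ENNReal.ofReal_ne_top this

lemma pdiam_translate (w : Pt n → ℝ) (a : Pt n) (U : Set (Pt n)) :
    pdiam w ((fun x => a + x) '' U) = pdiam w U := by
  apply le_antisymm
  · refine pdiam_le w ?_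
    rintro _ ⟨x, hx, rfl⟩ _ ⟨y, hy, rfl⟩
    have : a + x - (a + y) = x - y := by abel
    rw [this]
    exact ofReal_w_le_pdiam w hx hy
  · refine pdiam_le w fun x hx y hy => ?_
    have : x - y = (a + x) - (a + y) := by abel
    rw [this]
    exact ofReal_w_le_pdiam w ⟨x, hx, rfl⟩ ⟨y, hy, rfl⟩

lemma exists_unit_norm (hn : 0 < n) : ∃ x : Pt n, ‖x‖ = 1 := by
  have : Nontrivial (Pt n) :=
    Module.nontrivial_of_finrank_pos (R := ℝ) (M := Pt n)
      (by rw [finrank_euclideanSpace_fin]; exact hn)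
  exact exists_norm_eq (Pt n) zero_le_one

lemma expand_const (hn : 0 < n) (A : Matrix (Fin n) (Fin n) ℝ)
    (hAnorm : ∀ x : Pt n, ‖x‖ ≤ ‖mapp A x‖)
    (hAeq : ∀ x : Pt n, ‖x‖ = ‖mapp A x‖ → x = 0) :
    ∃ m : ℝ, 1 < m ∧ ∀ x : Pt n, m * ‖x‖ ≤ ‖mapp A x‖ := by
  obtain ⟨x₀, hx₀⟩ := exists_unit_norm (n := n) hn
  have hcont : Continuous fun x : Pt n => ‖mapp A x‖ :=
    ((Matrix.toEuclideanLin A).continuous_of_finiteDimensional).norm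
  have hx₀S : x₀ ∈ Metric.sphere (0 : Pt n) 1 := by
    simpa [mem_sphere_zero_iff_norm] using hx₀
  obtain ⟨x₁, hx₁S, hmin⟩ :=
    (isCompact_sphere (0 : Pt n) 1).exists_isMinOn ⟨x₀, hx₀S⟩ hcont.continuousOn
  have hx₁ : ‖x₁‖ = 1 := mem_sphere_zero_iff_norm.mp hx₁S
  refine ⟨‖mapp A x₁‖, ?_, ?_⟩
  · rcases lt_or_eq_of_le (by simpa [hx₁] using hAnorm x₁) with h | h
    · exact h
    · exfalso
      have := hAeq x₁ (by rw [hx₁, ← h])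
      rw [this, norm_zero] at hx₁; norm_num at hx₁
  · intro x
    rcases eq_or_ne x 0 with rfl | hx
    · simp [mapp]
    · have hxn : (0 : ℝ) < ‖x‖ := norm_pos_iff.mpr hx
      have hu : (‖x‖⁻¹ • x) ∈ Metric.sphere (0 : Pt n) 1 := by
        simp [mem_sphere_zero_iff_norm, norm_smul, abs_of_pos (inv_pos.mpr hxn),
          inv_mul_cancel₀ hxn.ne']
      have h1 : ‖mapp A x₁‖ ≤ ‖mapp A (‖x‖⁻¹ • x)‖ := hmin hu
      have h2 : mapp A (‖x‖⁻¹ • x) = ‖x‖⁻¹ • mapp A x := by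
        simp only [mapp, _root_.map_smul]
      rw [h2, norm_smul, norm_inv, norm_norm] at h1
      calc ‖mapp A x₁‖ * ‖x‖ ≤ (‖x‖⁻¹ * ‖mapp A x‖) * ‖x‖ := by
            exact mul_le_mul_of_nonneg_right h1 hxn.le
        _ = ‖mapp A x‖ := by field_simp

lemma w_pos {A : Matrix (Fin n) (Fin n) ℝ} {w : Pt n → ℝ} (hw : IsPseudoNorm A w)
    {x : Pt n} (hx : x ≠ 0) : 0 < w x :=
  lt_of_le_of_ne (hw.nonneg x) (fun h => hx ((hw.eq_zero_iff x).mp h.symm))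

lemma lam_gt_one (hn : 0 < n) (A : Matrix (Fin n) (Fin n) ℝ)
    {w : Pt n → ℝ} (hw : IsPseudoNorm A w)
    {m : ℝ} (hm : 1 < m) (hmA : ∀ x : Pt n, m * ‖x‖ ≤ ‖mapp A x‖) :
    1 < |A.det| ^ ((1 : ℝ) / n) := by
  set lam : ℝ := |A.det| ^ ((1 : ℝ) / n) with hlam
  obtain ⟨C, hC, α₁, hα₁, α₂, hα₂, hbig, hsml⟩ := hw.comparable
  obtain ⟨x₀, hx₀⟩ := exists_unit_norm (n := n) hn
  by_contra hcon
  push_neg at hcon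
  have hlam0 : 0 ≤ lam := Real.rpow_nonneg (abs_nonneg _) _
  have hx₀0 : x₀ ≠ 0 := by intro h; rw [h, norm_zero] at hx₀; norm_num at hx₀
  set W := w x₀ with hW
  have hWpos : 0 < W := w_pos hw hx₀0
  set f : Pt n → Pt n := mapp A with hf
  have hnorm_iter : ∀ k : ℕ, m ^ k ≤ ‖f^[k] x₀‖ := by
    intro k
    induction k with
    | zero => simp [hx₀]
    | succ k ih =>
      rw [Function.iterate_succ_apply']
      calc m ^ (k + 1) = m * m ^ k := by ring
        _ ≤ m * ‖f^[k] x₀‖ :=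
            mul_le_mul_of_nonneg_left ih (by linarith)
        _ ≤ ‖f (f^[k] x₀)‖ := hmA _
  have hw_iter : ∀ k : ℕ, w (f^[k] x₀) = lam ^ k * W := by
    intro k
    induction k with
    | zero => simp [hW]
    | succ k ih =>
      rw [Function.iterate_succ_apply', hf]
      rw [hw.scaling, ← hlam, ih]; ring
  -- choose k with large norm
  set N : ℝ := max 1 ((C * (W + 1)) ^ α₁⁻¹) with hN
  obtain ⟨k, hk⟩ := pow_unbounded_of_one_lt N hm
  have hxk : N < ‖f^[k] x₀‖ := lt_of_lt_of_le hk (hnorm_iter k)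
  have h1 : 1 < ‖f^[k] x₀‖ := lt_of_le_of_lt (le_max_left _ _) hxk
  have h2 : C * (W + 1) < ‖f^[k] x₀‖ ^ α₁ := by
    have hCW : (0 : ℝ) ≤ C * (W + 1) := by positivity
    calc C * (W + 1) = ((C * (W + 1)) ^ α₁⁻¹) ^ α₁ :=
          (Real.rpow_inv_rpow hCW hα₁.ne').symm
      _ < ‖f^[k] x₀‖ ^ α₁ := by
          apply Real.rpow_lt_rpow (Real.rpow_nonneg hCW _) _ hα₁
          exact lt_of_le_of_lt (le_max_right _ _) hxk
  have h3 : W + 1 ≤ w (f^[k] x₀) := by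
    have := (hbig _ h1).1
    have h4 : C⁻¹ * (C * (W + 1)) ≤ C⁻¹ * ‖f^[k] x₀‖ ^ α₁ :=
      mul_le_mul_of_nonneg_left h2.le (by positivity)
    rw [← mul_assoc, inv_mul_cancel₀ hC.ne', one_mul] at h4
    linarith
  have h5 : w (f^[k] x₀) ≤ W := by
    rw [hw_iter k]
    have : lam ^ k ≤ 1 := pow_le_one₀ hlam0 hcon
    nlinarith
  linarith

lemma key_lemma (hn : 0 < n) (A : Matrix (Fin n) (Fin n) ℝ)
    (hAnorm : ∀ x : Pt n, ‖x‖ ≤ ‖mapp A x‖)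
    (hAeq : ∀ x : Pt n, ‖x‖ = ‖mapp A x‖ → x = 0)
    {w : Pt n → ℝ} (hw : IsPseudoNorm A w) {c ε : ℝ} (hc : 0 < c) (hε : 0 < ε) :
    ∃ R : ℝ, 1 ≤ R ∧ ∀ u v : Pt n, w v ≤ c → R ≤ w u → w (u + v) ≤ (1 + ε) * w u := by
  obtain ⟨m, hm, hmA⟩ := expand_const hn A hAnorm hAeq
  have hlam1 : 1 < |A.det| ^ ((1 : ℝ) / n) := lam_gt_one hn A hw hm hmA
  set lam : ℝ := |A.det| ^ ((1 : ℝ) / n) with hlamdef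
  have hlam0 : (0 : ℝ) < lam := lt_trans one_pos hlam1
  obtain ⟨C, hC, α₁, hα₁, α₂, hα₂, hbig, hsml⟩ := hw.comparable
  -- the linear equivalence
  set L : Pt n →ₗ[ℝ] Pt n := Matrix.toEuclideanLin A with hLdef
  have hinj : Function.Injective L := by
    intro a b hab
    have h0 : L (a - b) = 0 := by rw [map_sub, hab, sub_self]
    have h1 : ‖a - b‖ ≤ ‖L (a - b)‖ := hAnorm (a - b)
    rw [h0, norm_zero] at h1
    exact sub_eq_zero.mp (norm_le_zero_iff.mp h1)
  have := (inferInstance : FiniteDimensional ℝ (Pt n))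
  set e : Pt n ≃ₗ[ℝ] Pt n :=
    LinearEquiv.ofBijective L ⟨hinj, LinearMap.injective_iff_surjective.mp hinj⟩ with hedef
  have heL : ∀ x : Pt n, w x = lam * w (e.symm x) := by
    intro x
    have h1 : L (e.symm x) = x := by
      have := e.apply_symm_apply x
      exact this
    have h2 := hw.scaling (e.symm x)
    rw [show mapp A (e.symm x) = L (e.symm x) from rfl, h1] at h2
    exact h2
  have hiter : ∀ (k : ℕ) (x : Pt n), w x = lam ^ k * w ((⇑e.symm)^[k] x) := by
    intro k
    induction k with
    | zero => simp
    | succ k ih =>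
      intro x
      rw [Function.iterate_succ_apply, heL x, ih (e.symm x), pow_succ]
      ring
  have hiter_add : ∀ (k : ℕ) (u v : Pt n),
      (⇑e.symm)^[k] (u + v) = (⇑e.symm)^[k] u + (⇑e.symm)^[k] v := by
    intro k
    induction k with
    | zero => simp
    | succ k ih =>
      intro u v
      rw [Function.iterate_succ_apply, Function.iterate_succ_apply,
        Function.iterate_succ_apply, map_add, ih]
  -- norm bound on the annulus
  set M₀ : ℝ := max 1 ((C * lam) ^ α₁⁻¹) with hM₀def
  have hM₀ : ∀ x : Pt n, w x ≤ lam → ‖x‖ ≤ M₀ := by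
    intro x hx
    by_contra hcon
    push_neg at hcon
    have h1 : 1 < ‖x‖ := lt_of_le_of_lt (le_max_left _ _) hcon
    have h2 : C * lam < ‖x‖ ^ α₁ := by
      have hCl : (0 : ℝ) ≤ C * lam := by positivity
      calc C * lam = ((C * lam) ^ α₁⁻¹) ^ α₁ := (Real.rpow_inv_rpow hCl hα₁.ne').symm
        _ < ‖x‖ ^ α₁ := Real.rpow_lt_rpow (Real.rpow_nonneg hCl _)
            (lt_of_le_of_lt (le_max_right _ _) hcon) hα₁
    have h3 := (hbig x h1).1
    have h4 : C⁻¹ * (C * lam) < C⁻¹ * ‖x‖ ^ α₁ :=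
      mul_lt_mul_of_pos_left h2 (by positivity)
    rw [← mul_assoc, inv_mul_cancel₀ hC.ne', one_mul] at h4
    linarith
  -- uniform continuity on a compact ball
  have hTT : IsCompact (Metric.closedBall (0 : Pt n) (M₀ + 1)) := isCompact_closedBall _ _
  have huc := hTT.uniformContinuousOn_of_continuous hw.continuous.continuousOn
  rw [Metric.uniformContinuousOn_iff] at huc
  obtain ⟨δ, hδ, hδ'⟩ := huc ε hε
  set δ₁ : ℝ := min (δ / 2) 1 with hδ₁def
  have hδ₁ : 0 < δ₁ := lt_min (by linarith) one_pos
  have hδ₁1 : δ₁ ≤ 1 := min_le_right _ _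
  set τ : ℝ := C⁻¹ * δ₁ ^ α₂ / 2 with hτdef
  have hτ : 0 < τ := by positivity
  have hsmall : ∀ x : Pt n, w x ≤ τ → ‖x‖ ≤ δ₁ := by
    intro x hx
    by_contra hcon
    push_neg at hcon
    have hkey : C⁻¹ * δ₁ ^ α₂ ≤ w x := by
      rcases le_or_gt ‖x‖ 1 with h1 | h1
      · calc C⁻¹ * δ₁ ^ α₂ ≤ C⁻¹ * ‖x‖ ^ α₂ := by
              apply mul_le_mul_of_nonneg_left _ (by positivity)
              exact Real.rpow_le_rpow hδ₁.le hcon.le hα₂.le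
          _ ≤ w x := (hsml x h1).1
      · have h2 : (1 : ℝ) ≤ ‖x‖ ^ α₁ := by
          calc (1 : ℝ) = 1 ^ α₁ := (Real.one_rpow _).symm
            _ ≤ ‖x‖ ^ α₁ := Real.rpow_le_rpow zero_le_one h1.le hα₁.le
        have h3 : δ₁ ^ α₂ ≤ 1 := Real.rpow_le_one hδ₁.le hδ₁1 hα₂.le
        calc C⁻¹ * δ₁ ^ α₂ ≤ C⁻¹ * 1 := by
              apply mul_le_mul_of_nonneg_left h3 (by positivity)
          _ ≤ C⁻¹ * ‖x‖ ^ α₁ := by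
              apply mul_le_mul_of_nonneg_left h2 (by positivity)
          _ ≤ w x := (hbig x h1).1
    rw [hτdef] at hx
    nlinarith
  refine ⟨max 1 (lam * c / τ), le_max_left _ _, ?_⟩
  intro u v hvc hRu
  have hu1 : (1 : ℝ) ≤ w u := le_trans (le_max_left _ _) hRu
  -- find k with lam ^ k ≤ w u < lam ^ (k + 1)
  obtain ⟨k, hk0, hk1⟩ : ∃ k : ℕ, lam ^ k ≤ w u ∧ w u < lam ^ (k + 1) := by
    have hex : ∃ j : ℕ, w u < lam ^ (j + 1) := by
      obtain ⟨j, hj⟩ := pow_unbounded_of_one_lt (w u) hlam1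
      exact ⟨j, lt_of_lt_of_le hj (pow_le_pow_right₀ hlam1.le (Nat.le_succ j))⟩
    refine ⟨Nat.find hex, ?_, Nat.find_spec hex⟩
    rcases Nat.eq_zero_or_pos (Nat.find hex) with h | h
    · rw [h, pow_zero]; exact hu1
    · have hmin := Nat.find_min hex (Nat.sub_lt h one_pos)
      push_neg at hmin
      have hfe : Nat.find hex - 1 + 1 = Nat.find hex := by omega
      rwa [hfe] at hmin
  have hlamk : (0 : ℝ) < lam ^ k := by positivity
  set u₀ : Pt n := (⇑e.symm)^[k] u with hu₀def
  set v₀ : Pt n := (⇑e.symm)^[k] v with hv₀def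
  have hu₀eq : w u = lam ^ k * w u₀ := hiter k u
  have hv₀eq : w v = lam ^ k * w v₀ := hiter k v
  have hwu₀1 : (1 : ℝ) ≤ w u₀ := by
    rw [hu₀eq] at hk0
    by_contra hcon
    push_neg at hcon
    nlinarith
  have hwu₀lam : w u₀ ≤ lam := by
    rw [hu₀eq, pow_succ] at hk1
    by_contra hcon
    push_neg at hcon
    nlinarith
  -- v₀ is small
  have hlamk_large : c / τ ≤ lam ^ k := by
    have h1 : lam * c / τ ≤ w u := le_trans (le_max_right _ _) hRu
    have h2 : lam * (c / τ) < lam ^ k * lam := by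
      rw [pow_succ] at hk1
      rw [← mul_div_assoc]
      linarith
    rw [mul_comm (lam ^ k) lam] at h2
    exact (lt_of_mul_lt_mul_left h2 hlam0.le).le
  have hwv₀ : w v₀ ≤ τ := by
    have h1 : lam ^ k * w v₀ ≤ c := hv₀eq ▸ hvc
    have h3 : (c / τ) * w v₀ ≤ c :=
      le_trans (mul_le_mul_of_nonneg_right hlamk_large (hw.nonneg _)) h1
    rw [div_mul_eq_mul_div, div_le_iff₀ hτ] at h3
    exact (mul_le_mul_iff_right₀ hc).mp h3
  have hnv₀ : ‖v₀‖ ≤ δ₁ := hsmall v₀ hwv₀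
  have hnu₀ : ‖u₀‖ ≤ M₀ := hM₀ u₀ hwu₀lam
  have hmemu : u₀ ∈ Metric.closedBall (0 : Pt n) (M₀ + 1) := by
    rw [Metric.mem_closedBall, dist_zero_right]; linarith
  have hmemuv : u₀ + v₀ ∈ Metric.closedBall (0 : Pt n) (M₀ + 1) := by
    rw [Metric.mem_closedBall, dist_zero_right]
    calc ‖u₀ + v₀‖ ≤ ‖u₀‖ + ‖v₀‖ := norm_add_le _ _
      _ ≤ M₀ + 1 := by linarith
  have hdist : dist (u₀ + v₀) u₀ < δ := by
    rw [dist_eq_norm, add_sub_cancel_left]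
    have : δ₁ ≤ δ / 2 := min_le_left _ _
    linarith
  have hwd := hδ' _ hmemuv _ hmemu hdist
  rw [Real.dist_eq, abs_lt] at hwd
  have hεu : ε * 1 ≤ ε * w u₀ := mul_le_mul_of_nonneg_left hwu₀1 hε.le
  have hmain : w (u₀ + v₀) ≤ (1 + ε) * w u₀ := by linarith [hwd.2]
  have hfin : w (u + v) = lam ^ k * w (u₀ + v₀) := by
    rw [hiter k (u + v), hiter_add k u v]
  rw [hfin, hu₀eq]
  calc lam ^ k * w (u₀ + v₀) ≤ lam ^ k * ((1 + ε) * w u₀) :=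
        mul_le_mul_of_nonneg_left hmain hlamk.le
    _ = (1 + ε) * (lam ^ k * w u₀) := by ring

lemma fatten (hn : 0 < n) (A : Matrix (Fin n) (Fin n) ℝ)
    (hAnorm : ∀ x : Pt n, ‖x‖ ≤ ‖mapp A x‖)
    (hAeq : ∀ x : Pt n, ‖x‖ = ‖mapp A x‖ → x = 0)
    {w : Pt n → ℝ} (hw : IsPseudoNorm A w) {K : Set (Pt n)} (hK : IsCompact K)
    {ε : ℝ} (hε : 0 < ε) :
    ∃ r₁ : ℝ, 0 < r₁ ∧ ∀ U : Set (Pt n), ENNReal.ofReal r₁ ≤ pdiam w U →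
      pdiam w (U + K) ≤ ENNReal.ofReal (1 + ε) * pdiam w U := by
  obtain ⟨β, hβ, htri⟩ := hw.quasi_triangle
  -- a bound for w on differences of K
  obtain ⟨c₀, hc₀⟩ := (hK.prod hK).bddAbove_image
    ((hw.continuous.comp (continuous_fst.sub continuous_snd)).continuousOn
      (s := K ×ˢ K))
  set c : ℝ := max c₀ 1 with hcdef
  have hc : 0 < c := lt_of_lt_of_le one_pos (le_max_right _ _)
  have hcK : ∀ p ∈ K, ∀ q ∈ K, w (p - q) ≤ c := fun p hp q hq =>
    le_trans (hc₀ ⟨(p, q), ⟨hp, hq⟩, rfl⟩) (le_max_left _ _)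
  obtain ⟨R, hR1, hRkey⟩ := key_lemma hn A hAnorm hAeq hw hc hε
  refine ⟨max R (β * max R c) + 1, by positivity, ?_⟩
  intro U hU
  refine pdiam_le (U := U + K) w ?_
  rintro z hz z' hz'
  rw [Set.mem_add] at hz hz'
  obtain ⟨a, ha, p, hp, rfl⟩ := hz
  obtain ⟨b, hb, q, hq, rfl⟩ := hz'
  have hzz : a + p - (b + q) = (a - b) + (p - q) := by abel
  rw [hzz]
  rcases le_or_gt R (w (a - b)) with hcase | hcase
  · have h1 : w ((a - b) + (p - q)) ≤ (1 + ε) * w (a - b) :=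
      hRkey _ _ (hcK p hp q hq) hcase
    calc ENNReal.ofReal (w ((a - b) + (p - q))) ≤ ENNReal.ofReal ((1 + ε) * w (a - b)) :=
          ENNReal.ofReal_le_ofReal h1
      _ = ENNReal.ofReal (1 + ε) * ENNReal.ofReal (w (a - b)) :=
          ENNReal.ofReal_mul (by linarith)
      _ ≤ ENNReal.ofReal (1 + ε) * pdiam w U :=
          mul_le_mul_right (ofReal_w_le_pdiam w ha hb) _
  · have h1 : w ((a - b) + (p - q)) ≤ β * max R c := by
      calc w ((a - b) + (p - q)) ≤ β * max (w (a - b)) (w (p - q)) := htri _ _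
        _ ≤ β * max R c := by
            apply mul_le_mul_of_nonneg_left _ hβ.le
            exact max_le_max hcase.le (hcK p hp q hq)
    calc ENNReal.ofReal (w ((a - b) + (p - q)))
        ≤ ENNReal.ofReal (max R (β * max R c) + 1) := by
          apply ENNReal.ofReal_le_ofReal
          calc w ((a - b) + (p - q)) ≤ β * max R c := h1
            _ ≤ max R (β * max R c) + 1 := by
                have := le_max_right R (β * max R c); linarith
      _ ≤ pdiam w U := hU
      _ ≤ ENNReal.ofReal (1 + ε) * pdiam w U := by
          nth_rewrite 1 [← one_mul (pdiam w U)]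
          apply mul_le_mul_left
          exact ENNReal.one_le_ofReal.mpr (by linarith)

/-- The sup appearing in the definition of `upperDensity`. -/
def densS (w : Pt n → ℝ) (s r : ℝ) (ν : Measure (Pt n)) : ℝ≥0∞ :=
  ⨆ (U : Set (Pt n)) (_ : IsCompact U) (_ : Convex ℝ U)
    (_ : ENNReal.ofReal r ≤ pdiam w U), ν U / pdiam w U ^ s

lemma upperDensity_eq (w : Pt n → ℝ) (s : ℝ) (ν : Measure (Pt n)) :
    upperDensity w s ν = ⨅ (r : ℝ) (_ : 0 < r), densS w s r ν := rfl

lemma densS_antitone (w : Pt n → ℝ) (s : ℝ) (ν : Measure (Pt n)) {r r' : ℝ} (h : r ≤ r') :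
    densS w s r' ν ≤ densS w s r ν := by
  refine iSup_le fun U => iSup_le fun hc => iSup_le fun hconv => iSup_le fun hd => ?_
  exact le_iSup_of_le U (le_iSup_of_le hc (le_iSup_of_le hconv
    (le_iSup_of_le (le_trans (ENNReal.ofReal_le_ofReal h) hd) le_rfl)))

lemma ratio_le_densS (w : Pt n → ℝ) (s r : ℝ) (ν : Measure (Pt n)) {U : Set (Pt n)}
    (hc : IsCompact U) (hconv : Convex ℝ U) (hd : ENNReal.ofReal r ≤ pdiam w U) :
    ν U / pdiam w U ^ s ≤ densS w s r ν :=
  le_iSup_of_le U (le_iSup_of_le hc (le_iSup_of_le hconv (le_iSup_of_le hd le_rfl)))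

lemma measure_le_densS {w : Pt n → ℝ} (hwc : Continuous w) (s : ℝ) (hs : 0 ≤ s) {r : ℝ}
    (hr : 0 < r) (ν : Measure (Pt n)) {U : Set (Pt n)}
    (hc : IsCompact U) (hconv : Convex ℝ U) (hd : ENNReal.ofReal r ≤ pdiam w U) :
    ν U ≤ densS w s r ν * pdiam w U ^ s := by
  have hp0 : pdiam w U ≠ 0 := by
    intro h
    rw [h, le_zero_iff] at hd
    exact (ENNReal.ofReal_pos.mpr hr).ne' hd
  have hpt : pdiam w U ≠ ⊤ := pdiam_ne_top hwc hc
  have hs0 : pdiam w U ^ s ≠ 0 := (ENNReal.rpow_pos (pos_iff_ne_zero.mpr hp0) hpt).ne'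
  have hst : pdiam w U ^ s ≠ ⊤ := ENNReal.rpow_ne_top_of_nonneg hs hpt
  have := ratio_le_densS w s r ν hc hconv hd
  rwa [ENNReal.div_le_iff hs0 hst] at this

lemma exists_pdiam_ball_ge (hn : 0 < n) {A : Matrix (Fin n) (Fin n) ℝ} {w : Pt n → ℝ}
    (hw : IsPseudoNorm A w) (t : ℝ) :
    ∃ k₀ : ℕ, ∀ k : ℕ, k₀ ≤ k → ENNReal.ofReal t ≤ pdiam w (Metric.closedBall (0 : Pt n) k) := by
  obtain ⟨C, hC, α₁, hα₁, α₂, hα₂, hbig, hsml⟩ := hw.comparable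
  obtain ⟨e, he⟩ := exists_unit_norm (n := n) hn
  set N : ℝ := max 2 ((C * max t 1) ^ α₁⁻¹) with hN
  refine ⟨Nat.ceil N, fun k hk => ?_⟩
  have hkN : N ≤ (k : ℝ) := le_trans (Nat.le_ceil N) (by exact_mod_cast hk)
  have hk1 : (1 : ℝ) < (k : ℝ) := lt_of_lt_of_le (by norm_num : (1:ℝ) < 2)
    (le_trans (le_max_left _ _) hkN)
  have hk0 : (0 : ℝ) ≤ (k : ℝ) := by linarith
  set x : Pt n := (k : ℝ) • e with hx
  have hxn : ‖x‖ = (k : ℝ) := by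
    rw [hx, norm_smul, he, mul_one, Real.norm_eq_abs, abs_of_nonneg hk0]
  have hxball : x ∈ Metric.closedBall (0 : Pt n) k := by
    rw [Metric.mem_closedBall, dist_zero_right, hxn]
  have h0ball : (0 : Pt n) ∈ Metric.closedBall (0 : Pt n) k := by
    rw [Metric.mem_closedBall, dist_self]; exact hk0
  have hwx : t ≤ w x := by
    have h1 : C * max t 1 ≤ ‖x‖ ^ α₁ := by
      have hCt : (0 : ℝ) ≤ C * max t 1 := by positivity
      calc C * max t 1 = ((C * max t 1) ^ α₁⁻¹) ^ α₁ := (Real.rpow_inv_rpow hCt hα₁.ne').symm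
        _ ≤ ‖x‖ ^ α₁ := by
            apply Real.rpow_le_rpow (Real.rpow_nonneg hCt _) _ hα₁.le
            rw [hxn]; exact le_trans (le_max_right _ _) hkN
    have h2 := (hbig x (by rw [hxn]; exact hk1)).1
    have h3 : C⁻¹ * (C * max t 1) ≤ C⁻¹ * ‖x‖ ^ α₁ :=
      mul_le_mul_of_nonneg_left h1 (by positivity)
    rw [← mul_assoc, inv_mul_cancel₀ hC.ne', one_mul] at h3
    have h4 : t ≤ max t 1 := le_max_left _ _
    linarith
  calc ENNReal.ofReal t ≤ ENNReal.ofReal (w (x - 0)) := by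
        apply ENNReal.ofReal_le_ofReal; rw [sub_zero]; exact hwx
    _ ≤ pdiam w (Metric.closedBall (0 : Pt n) k) := ofReal_w_le_pdiam w hxball h0ball

lemma conv_le_aux (hn : 0 < n) (A : Matrix (Fin n) (Fin n) ℝ)
    {w : Pt n → ℝ} (hw : IsPseudoNorm A w)
    {s : ℝ} (hs : 0 ≤ s) (μ σ : Measure (Pt n)) (hσ : IsProbabilityMeasure σ) :
    upperDensity w s (mconv μ σ) ≤ upperDensity w s μ := by
  haveI := hσ
  rcases eq_or_ne (upperDensity w s μ) ⊤ with htop | htop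
  · rw [htop]; exact le_top
  -- there is r₀ > 0 with densS w s r₀ μ < ⊤
  obtain ⟨r₀, hr₀, hfin⟩ : ∃ r₀ : ℝ, 0 < r₀ ∧ densS w s r₀ μ < ⊤ := by
    have h := lt_top_iff_ne_top.mpr htop
    rw [upperDensity_eq, iInf_lt_iff] at h
    obtain ⟨r₀, h⟩ := h
    rw [iInf_lt_iff] at h
    obtain ⟨hr₀, h⟩ := h
    exact ⟨r₀, hr₀, h⟩
  -- μ is finite on big closed balls, hence sigma-finite
  obtain ⟨k₀, hk₀⟩ := exists_pdiam_ball_ge hn hw r₀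
  haveI : IsLocallyFiniteMeasure μ := by
    constructor
    intro x
    set k : ℕ := k₀ + Nat.ceil (‖x‖ + 1) with hkdef
    refine ⟨Metric.closedBall (0 : Pt n) k, ?_, ?_⟩
    · apply Filter.mem_of_superset (Metric.ball_mem_nhds x one_pos)
      intro z hz
      rw [Metric.mem_ball] at hz
      rw [Metric.mem_closedBall, dist_zero_right]
      have h1 : ‖z‖ ≤ ‖x‖ + 1 := by
        have := norm_sub_norm_le z x
        rw [← dist_eq_norm] at this
        linarith
      calc ‖z‖ ≤ ‖x‖ + 1 := h1
        _ ≤ (Nat.ceil (‖x‖ + 1) : ℝ) := Nat.le_ceil _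
        _ ≤ (k : ℝ) := by exact_mod_cast Nat.le_add_left _ _
    · have hball := hk₀ k (Nat.le_add_right _ _)
      have h2 := measure_le_densS hw.continuous s hs hr₀ μ (isCompact_closedBall _ _)
        (convex_closedBall _ _) hball
      calc μ (Metric.closedBall (0 : Pt n) k) ≤ densS w s r₀ μ *
            pdiam w (Metric.closedBall (0 : Pt n) k) ^ s := h2
        _ < ⊤ := ENNReal.mul_lt_top hfin
            (lt_top_iff_ne_top.mpr (ENNReal.rpow_ne_top_of_nonneg hs
              (pdiam_ne_top hw.continuous (isCompact_closedBall _ _))))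
  haveI : SigmaFinite μ := sigmaFinite_of_locallyFinite
  -- compare the sups at every scale
  have hmain : ∀ r : ℝ, 0 < r → densS w s r (mconv μ σ) ≤ densS w s r μ := by
    intro r hr
    refine iSup_le fun U => iSup_le fun hc => iSup_le fun hconv => iSup_le fun hd => ?_
    have hUm : MeasurableSet U := hc.isClosed.measurableSet
    have hadd : Measurable fun p : Pt n × Pt n => p.1 + p.2 :=
      (continuous_fst.add continuous_snd).measurable
    have hp0 : pdiam w U ≠ 0 := by
      intro h
      rw [h, le_zero_iff] at hd
      exact (ENNReal.ofReal_pos.mpr hr).ne' hd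
    have hpt : pdiam w U ≠ ⊤ := pdiam_ne_top hw.continuous hc
    have hs0 : pdiam w U ^ s ≠ 0 := (ENNReal.rpow_pos (pos_iff_ne_zero.mpr hp0) hpt).ne'
    have hst : pdiam w U ^ s ≠ ⊤ := ENNReal.rpow_ne_top_of_nonneg hs hpt
    have hval : (mconv μ σ) U ≤ densS w s r μ * pdiam w U ^ s := by
      rw [mconv, Measure.map_apply hadd hUm, Measure.prod_apply_symm (hadd hUm)]
      have hpoint : ∀ y : Pt n,
          μ ((fun x => (x, y)) ⁻¹' ((fun p : Pt n × Pt n => p.1 + p.2) ⁻¹' U)) ≤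
            densS w s r μ * pdiam w U ^ s := by
        intro y
        have hset : ((fun x => (x, y)) ⁻¹' ((fun p : Pt n × Pt n => p.1 + p.2) ⁻¹' U)) =
            (fun x => -y + x) '' U := by
          ext z
          constructor
          · intro hz
            exact ⟨z + y, hz, by module⟩
          · rintro ⟨u, hu, rfl⟩
            show -y + u + y ∈ U
            have : -y + u + y = u := by module
            rwa [this]
        rw [hset]
        have hcomp : IsCompact ((fun x => -y + x) '' U) :=
          hc.image (continuous_const.add continuous_id)
        have hconv' : Convex ℝ ((fun x => -y + x) '' U) := hconv.translate (-y)
        have hpd : pdiam w ((fun x => -y + x) '' U) = pdiam w U := pdiam_translate w (-y) U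
        have := measure_le_densS hw.continuous s hs hr μ hcomp hconv' (hpd ▸ hd)
        rwa [hpd] at this
      calc ∫⁻ y, μ ((fun x => (x, y)) ⁻¹' ((fun p : Pt n × Pt n => p.1 + p.2) ⁻¹' U)) ∂σ
          ≤ ∫⁻ _, densS w s r μ * pdiam w U ^ s ∂σ := lintegral_mono hpoint
        _ = densS w s r μ * pdiam w U ^ s := by
            rw [lintegral_const, measure_univ, mul_one]
    rw [ENNReal.div_le_iff hs0 hst]
    exact hval
  rw [upperDensity_eq, upperDensity_eq]
  exact le_iInf fun r => le_iInf fun hr =>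
    le_trans (iInf₂_le r hr) (hmain r hr)

lemma ennreal_mul_div_mul {x a y b : ℝ≥0∞} (hy0 : y ≠ 0) (hyt : y ≠ ⊤) :
    (x * a) / (y * b) = (x / y) * (a / b) := by
  rw [div_eq_mul_inv, div_eq_mul_inv, div_eq_mul_inv, ENNReal.mul_inv (Or.inl hy0) (Or.inl hyt)]
  ring

lemma conv_lower (μ σ : Measure (Pt n)) [SFinite σ] {U K : Set (Pt n)}
    (hUm : MeasurableSet U) (hU'm : MeasurableSet (U + K)) :
    σ K * μ U ≤ (mconv μ σ) (U + K) := by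
  have hadd : Measurable fun p : Pt n × Pt n => p.1 + p.2 :=
    (continuous_fst.add continuous_snd).measurable
  rw [mconv, Measure.map_apply hadd hU'm, Measure.prod_apply (hadd hU'm)]
  have hpoint : ∀ x : Pt n, (U.indicator (fun _ => σ K)) x ≤
      σ (Prod.mk x ⁻¹' ((fun p : Pt n × Pt n => p.1 + p.2) ⁻¹' (U + K))) := by
    intro x
    by_cases hx : x ∈ U
    · rw [Set.indicator_of_mem hx]
      apply measure_mono
      intro y hy
      exact Set.add_mem_add hx hy
    · rw [Set.indicator_of_notMem hx]
      exact zero_le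
  calc σ K * μ U = ∫⁻ x, (U.indicator (fun _ => σ K)) x ∂μ :=
        (lintegral_indicator_const hUm _).symm
    _ ≤ _ := lintegral_mono hpoint

lemma exists_sigma_ball {σ : Measure (Pt n)} (hσ : IsProbabilityMeasure σ) {ε : ℝ} (hε : 0 < ε) :
    ∃ ρ : ℕ, ENNReal.ofReal (1 - ε) < σ (Metric.closedBall (0 : Pt n) ρ) := by
  haveI := hσ
  have hmono : Monotone fun k : ℕ => Metric.closedBall (0 : Pt n) k := fun i j hij =>
    Metric.closedBall_subset_closedBall (by exact_mod_cast hij)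
  have huniv : ⋃ k : ℕ, Metric.closedBall (0 : Pt n) k = univ := by
    ext x
    simp only [mem_iUnion, mem_univ, iff_true, Metric.mem_closedBall, dist_zero_right]
    exact ⟨Nat.ceil ‖x‖, Nat.le_ceil _⟩
  have ht := tendsto_measure_iUnion_atTop (μ := σ) hmono
  rw [huniv, measure_univ] at ht
  have hlt : ENNReal.ofReal (1 - ε) < 1 := by
    rcases le_or_gt (1 - ε) 0 with h | h
    · rw [ENNReal.ofReal_eq_zero.mpr h]; exact zero_lt_one
    · rw [← ENNReal.ofReal_one]
      exact ENNReal.ofReal_lt_ofReal_iff_of_nonneg h.le |>.mpr (by linarith)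
  obtain ⟨ρ, hρ⟩ := (ht.eventually (eventually_gt_nhds hlt)).exists
  exact ⟨ρ, hρ⟩

lemma conv_ge_aux (hn : 0 < n) (A : Matrix (Fin n) (Fin n) ℝ)
    (hAnorm : ∀ x : Pt n, ‖x‖ ≤ ‖mapp A x‖)
    (hAeq : ∀ x : Pt n, ‖x‖ = ‖mapp A x‖ → x = 0)
    {w : Pt n → ℝ} (hw : IsPseudoNorm A w)
    {s : ℝ} (hs : 0 ≤ s) (μ σ : Measure (Pt n)) (hσ : IsProbabilityMeasure σ) :
    upperDensity w s μ ≤ upperDensity w s (mconv μ σ) := by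
  haveI := hσ
  -- the key estimate with loss (1-ε)/(1+ε)^s, for every ε ∈ (0,1)
  have hkey : ∀ ε : ℝ, 0 < ε → ε < 1 →
      ENNReal.ofReal ((1 - ε) / (1 + ε) ^ s) * upperDensity w s μ ≤
        upperDensity w s (mconv μ σ) := by
    intro ε hε hε1
    set κ : ℝ≥0∞ := ENNReal.ofReal ((1 - ε) / (1 + ε) ^ s) with hκdef
    obtain ⟨ρ, hρ⟩ := exists_sigma_ball hσ hε
    set K : Set (Pt n) := Metric.closedBall (0 : Pt n) ρ with hKdef
    have hKc : IsCompact K := isCompact_closedBall _ _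
    have hKconv : Convex ℝ K := convex_closedBall _ _
    have h0K : (0 : Pt n) ∈ K := by
      rw [hKdef, Metric.mem_closedBall, dist_self]; positivity
    obtain ⟨r₁, hr₁, hfat⟩ := fatten hn A hAnorm hAeq hw hKc hε
    -- auxiliary positivity facts
    have h1ε : (0 : ℝ) < 1 + ε := by linarith
    have hof0 : (ENNReal.ofReal (1 + ε)) ^ s ≠ 0 :=
      (ENNReal.rpow_pos (ENNReal.ofReal_pos.mpr h1ε) ENNReal.ofReal_ne_top).ne'
    have hoft : (ENNReal.ofReal (1 + ε)) ^ s ≠ ⊤ :=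
      ENNReal.rpow_ne_top_of_nonneg hs ENNReal.ofReal_ne_top
    have hκeq : κ = ENNReal.ofReal (1 - ε) / (ENNReal.ofReal (1 + ε)) ^ s := by
      rw [hκdef, ENNReal.ofReal_rpow_of_pos h1ε,
        ENNReal.ofReal_div_of_pos (Real.rpow_pos_of_pos h1ε s)]
    -- main estimate at scales r' ≥ r₁
    have H : ∀ r' : ℝ, 0 < r' → r₁ ≤ r' →
        κ * densS w s r' μ ≤ densS w s r' (mconv μ σ) := by
      intro r' hr' hr₁r'
      rw [densS]
      simp only [ENNReal.mul_iSup]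
      refine iSup_le fun U => iSup_le fun hc => iSup_le fun hconv => iSup_le fun hd => ?_
      -- the fattened set
      set U' : Set (Pt n) := U + K with hU'def
      have hU'c : IsCompact U' := hc.add hKc
      have hU'conv : Convex ℝ U' := hconv.add hKconv
      have hUsub : U ⊆ U' := fun x hx => by
        have := Set.add_mem_add hx h0K
        rwa [add_zero] at this
      have hU'd : ENNReal.ofReal r' ≤ pdiam w U' := le_trans hd (pdiam_mono w hUsub)
      have hfatU : pdiam w U' ≤ ENNReal.ofReal (1 + ε) * pdiam w U :=
        hfat U (le_trans (ENNReal.ofReal_le_ofReal hr₁r') hd)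
      -- measure lower bound
      have hmeas : ENNReal.ofReal (1 - ε) * μ U ≤ (mconv μ σ) U' := by
        calc ENNReal.ofReal (1 - ε) * μ U ≤ σ K * μ U :=
              mul_le_mul_left hρ.le _
          _ ≤ (mconv μ σ) U' := conv_lower μ σ hc.isClosed.measurableSet
              hU'c.isClosed.measurableSet
      -- diameter facts
      have hp0 : pdiam w U ≠ 0 := by
        intro h
        rw [h, le_zero_iff] at hd
        exact (ENNReal.ofReal_pos.mpr hr').ne' hd
      have hpt : pdiam w U ≠ ⊤ := pdiam_ne_top hw.continuous hc
      have hs0 : pdiam w U ^ s ≠ 0 := (ENNReal.rpow_pos (pos_iff_ne_zero.mpr hp0) hpt).ne'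
      have hst : pdiam w U ^ s ≠ ⊤ := ENNReal.rpow_ne_top_of_nonneg hs hpt
      have hdenom : pdiam w U' ^ s ≤ (ENNReal.ofReal (1 + ε)) ^ s * pdiam w U ^ s := by
        rw [← ENNReal.mul_rpow_of_nonneg _ _ hs]
        exact ENNReal.rpow_le_rpow hfatU hs
      calc κ * (μ U / pdiam w U ^ s)
          = (ENNReal.ofReal (1 - ε) * μ U) /
              ((ENNReal.ofReal (1 + ε)) ^ s * pdiam w U ^ s) := by
            rw [ennreal_mul_div_mul hof0 hoft, hκeq]
        _ ≤ (mconv μ σ) U' / pdiam w U' ^ s := ENNReal.div_le_div hmeas hdenom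
        _ ≤ densS w s r' (mconv μ σ) :=
            ratio_le_densS w s r' (mconv μ σ) hU'c hU'conv hU'd
    -- conclude the estimate for the upper densities
    rw [upperDensity_eq w s (mconv μ σ)]
    refine le_iInf fun r => le_iInf fun hr => ?_
    have hr' : 0 < max r r₁ := lt_of_lt_of_le hr (le_max_left _ _)
    calc κ * upperDensity w s μ ≤ κ * densS w s (max r r₁) μ := by
          apply mul_le_mul_right
          rw [upperDensity_eq]
          exact le_trans (iInf₂_le (max r r₁) hr') le_rfl
      _ ≤ densS w s (max r r₁) (mconv μ σ) := H _ hr' (le_max_right _ _)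
      _ ≤ densS w s r (mconv μ σ) := densS_antitone w s _ (le_max_left _ _)
  -- pass to the limit ε → 0 along εₖ = 1/(k+2)
  rcases eq_or_ne (upperDensity w s μ) 0 with h0 | h0
  · rw [h0]; exact zero_le
  rcases eq_or_ne (upperDensity w s μ) ⊤ with htop | htop
  · -- use ε = 1/2
    have h := hkey (1/2) (by norm_num) (by norm_num)
    rw [htop, ENNReal.mul_top] at h
    · exact le_trans le_top h
    · rw [ne_eq, ENNReal.ofReal_eq_zero, not_le]
      positivity
  -- finite positive case: use the limit
  have h1 : Filter.Tendsto (fun k : ℕ => (1 : ℝ)/(k + 2)) Filter.atTop (nhds 0) := by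
    have hb : Filter.Tendsto (fun k : ℕ => (k : ℝ) + 2) Filter.atTop Filter.atTop :=
      Filter.tendsto_atTop_add_const_right _ 2 tendsto_natCast_atTop_atTop
    simpa [one_div, Function.comp_def] using (tendsto_inv_atTop_zero.comp hb)
  have h2 : ContinuousAt (fun x : ℝ => (1 - x) / (1 + x) ^ s) 0 := by
    apply ContinuousAt.div
    · exact (continuous_const.sub continuous_id).continuousAt
    · exact (Real.continuousAt_rpow_const (1 + 0) s (by norm_num)).comp
        ((continuous_const.add continuous_id).continuousAt)
    · norm_num
  have h3 : Filter.Tendsto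
      (fun k : ℕ => ENNReal.ofReal ((1 - (1 : ℝ)/(k + 2)) / (1 + (1 : ℝ)/(k + 2)) ^ s))
      Filter.atTop (nhds 1) := by
    have := (ENNReal.continuous_ofReal.continuousAt.comp h2).tendsto.comp h1
    simp only [Function.comp] at this
    convert this using 2
    all_goals norm_num
  have htend : Filter.Tendsto
      (fun k : ℕ => ENNReal.ofReal ((1 - (1 : ℝ)/(k + 2)) / (1 + (1 : ℝ)/(k + 2)) ^ s) *
        upperDensity w s μ) Filter.atTop (nhds (upperDensity w s μ)) := by
    have := ENNReal.Tendsto.mul_const h3 (Or.inr htop)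
    simpa using this
  apply le_of_tendsto htend
  apply Filter.Eventually.of_forall
  intro k
  apply hkey
  · positivity
  · rw [div_lt_one (by positivity)]
    have : (0 : ℝ) ≤ (k : ℝ) := Nat.cast_nonneg k
    linarith

end AuxStmt14

/-- Lemma 5.1: convolving with a probability measure does not change the upper
`s`-density w.r.t. `w`. -/
theorem stmt14 {n : ℕ} (hn : 0 < n) (A : Matrix (Fin n) (Fin n) ℝ)
    (hA : IsExpandingMatrix A)
    (hAnorm : ∀ x : Pt n, ‖x‖ ≤ ‖mapp A x‖)
    (hAeq : ∀ x : Pt n, ‖x‖ = ‖mapp A x‖ → x = 0)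
    (w : Pt n → ℝ) (hw : IsPseudoNorm A w)
    (s : ℝ) (hs : 0 ≤ s) (μ σ : Measure (Pt n)) (hσ : IsProbabilityMeasure σ) :
    upperDensity w s (mconv μ σ) = upperDensity w s μ := by
  exact le_antisymm (conv_le_aux hn A hw hs μ σ hσ)
    (conv_ge_aux hn A hAnorm hAeq hw hs μ σ hσ)
end
end
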